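/- arXiv:0804.1056 — 2 statements merged into one kernel-verified Lean document; each statement's English description precedes it below -/
import Mathlib

section
/- Identifiability of the semiparametric convolution model: Let f₁ and f₂ be probability densities in L¹(ℝ), each satisfying Assumption (A), i.e. for i = 1,2 there exist Aᵢ > 0, βᵢ' > 0 and uᵢ > 0 with |Φ^{fᵢ}(u)| ≥ Aᵢ|u|^{−βᵢ'} for all |u| ≥ uᵢ. Let s₁, s₂ ∈ (0,2] and γ₁, γ₂ > 0. If Φ^{f₁}(u)·exp(−|γ₁u|^{s₁}) = Φ^{f₂}(u)·exp(−|γ₂u|^{s₂}) for all u ∈ ℝ, then s₁ = s₂, γ₁ = γ₂ and Φ^{f₁} = Φ^{f₂} (hence f₁ = f₂ almost everywhere). -/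
open MeasureTheory Real Complex
open Filter Asymptotics
open scoped FourierTransform RealInnerProductSpace Topology

/-- The Fourier transform `Φ^f(u) = ∫ e^{iux} f(x) dx` of a density `f`. -/
noncomputable def FT (f : ℝ → ℝ) (u : ℝ) : ℂ :=
  ∫ x : ℝ, Complex.exp (Complex.I * u * x) * (f x)

lemma aux_rpow_littleo {r s : ℝ} (h : r < s) :
    (fun x : ℝ => x ^ r) =o[atTop] (fun x : ℝ => x ^ s) := by
  rw [isLittleO_iff_tendsto']
  · apply (tendsto_rpow_neg_atTop (by linarith : 0 < s - r)).congr'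
    filter_upwards [eventually_gt_atTop 0] with x hx
    rw [neg_sub, Real.rpow_sub hx]
  · filter_upwards [eventually_gt_atTop 0] with x hx h0
    exact absurd h0 (by positivity)

lemma aux_tendsto_sub {c s : ℝ} (hc : 0 < c) (hs : 0 < s) {g : ℝ → ℝ}
    (hg : g =o[atTop] (fun x : ℝ => x ^ s)) :
    Tendsto (fun u : ℝ => c * u ^ s - g u) atTop atTop := by
  apply tendsto_atTop_mono' _ _ ((tendsto_rpow_atTop hs).const_mul_atTop (half_pos hc))
  filter_upwards [hg.def (half_pos hc), eventually_ge_atTop (0:ℝ)] with u hu hu0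
  have : g u ≤ c / 2 * u ^ s := by
    have := hu.trans_eq (by rw [Real.norm_eq_abs, _root_.abs_of_nonneg (Real.rpow_nonneg hu0 s)])
    calc g u ≤ ‖g u‖ := le_abs_self _
    _ ≤ c / 2 * u ^ s := this
  nlinarith [Real.rpow_nonneg hu0 s]

lemma aux_key {A β γ₁ γ₂ s₁ s₂ : ℝ} (hA : 0 < A) (hγ₁ : 0 < γ₁) (hγ₂ : 0 < γ₂)
    (hs₁ : 0 < s₁) (hs₂ : 0 < s₂)
    (h : ∀ᶠ u in atTop, (γ₂ * u) ^ s₂ ≤ (γ₁ * u) ^ s₁ + β * Real.log u - Real.log A)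
    (hcase : s₁ < s₂ ∨ (s₁ = s₂ ∧ γ₁ < γ₂)) : False := by
  have hT : Tendsto (fun u : ℝ => (γ₂ * u) ^ s₂ - (γ₁ * u) ^ s₁ - β * Real.log u)
      atTop atTop := by
    rcases hcase with hlt | ⟨heq, hlt⟩
    · have hg : (fun u : ℝ => γ₁ ^ s₁ * u ^ s₁ + β * Real.log u) =o[atTop]
          (fun x : ℝ => x ^ s₂) :=
        ((aux_rpow_littleo hlt).const_mul_left _).add
          ((isLittleO_log_rpow_atTop hs₂).const_mul_left _)
      apply (aux_tendsto_sub (by positivity : (0:ℝ) < γ₂ ^ s₂) hs₂ hg).congr'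
      filter_upwards [eventually_ge_atTop (0:ℝ)] with u hu
      rw [Real.mul_rpow hγ₂.le hu, Real.mul_rpow hγ₁.le hu]
      ring
    · subst heq
      have hc : 0 < γ₂ ^ s₁ - γ₁ ^ s₁ :=
        sub_pos.2 (Real.rpow_lt_rpow hγ₁.le hlt hs₁)
      have hg : (fun u : ℝ => β * Real.log u) =o[atTop] (fun x : ℝ => x ^ s₁) :=
        (isLittleO_log_rpow_atTop hs₁).const_mul_left _
      apply (aux_tendsto_sub hc hs₁ hg).congr'
      filter_upwards [eventually_ge_atTop (0:ℝ)] with u hu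
      rw [Real.mul_rpow hγ₂.le hu, Real.mul_rpow hγ₁.le hu]
      ring
  obtain ⟨u, h1, h2⟩ := (h.and (hT.eventually_gt_atTop (- Real.log A))).exists
  linarith

lemma FT_norm_le_one {f : ℝ → ℝ} (hf : Integrable f) (hnn : ∀ x, 0 ≤ f x)
    (hmass : ∫ x : ℝ, f x = 1) (u : ℝ) : ‖FT f u‖ ≤ 1 := by
  have : ‖FT f u‖ ≤ ∫ x : ℝ, ‖Complex.exp (Complex.I * u * x) * (f x : ℂ)‖ :=
    norm_integral_le_integral_norm _
  refine this.trans ?_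
  have : ∀ x : ℝ, ‖Complex.exp (Complex.I * u * x) * (f x : ℂ)‖ = f x := by
    intro x
    rw [norm_mul, Complex.norm_exp,
      Complex.norm_real, Real.norm_eq_abs, _root_.abs_of_nonneg (hnn x)]
    simp [Complex.mul_re]
  simp only [this]
  rw [hmass]

lemma FT_integrand_integrable {f : ℝ → ℝ} (hf : Integrable f) (u : ℝ) :
    Integrable (fun x : ℝ => Complex.exp (Complex.I * u * x) * (f x : ℂ)) := by
  have h1 : Integrable (fun x : ℝ => (f x : ℂ)) := hf.ofReal
  apply (h1.norm.const_mul 1).mono'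
  · exact (Continuous.aestronglyMeasurable (by fun_prop)).mul h1.1
  · filter_upwards with x
    rw [norm_mul, Complex.norm_exp]
    simp [Complex.mul_re]

lemma FT_sub {f g : ℝ → ℝ} (hf : Integrable f) (hg : Integrable g) (u : ℝ) :
    FT (fun x => f x - g x) u = FT f u - FT g u := by
  unfold FT
  rw [← integral_sub (FT_integrand_integrable hf u) (FT_integrand_integrable hg u)]
  congr 1 with x
  push_cast
  ring

lemma FT_eq_fourierIntegral {f : ℝ → ℝ} (ξ : ℝ) :
    𝓕 (fun x : ℝ => (f x : ℂ)) ξ = FT f (-(2 * π * ξ)) := by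
  rw [Real.fourier_real_eq]
  unfold FT
  congr 1 with x
  rw [Circle.smul_def, Real.fourierChar_apply, smul_eq_mul]
  congr 1
  push_cast
  ring

lemma gauss_conv_zero {h : ℝ → ℂ} (hh : Integrable h)
    (hF : ∀ ξ : ℝ, 𝓕 h ξ = 0) {c : ℝ} (hc : 0 < c) (v : ℝ) :
    ∫ w : ℝ, ((π * c : ℂ) ^ (Module.finrank ℝ ℝ / 2 : ℂ) *
      Complex.exp (-π ^ 2 * c * ‖v - w‖ ^ 2)) • h w = 0 := by
  have hb : (0:ℝ) < ((c:ℂ)⁻¹).re := by simpa using inv_pos.2 hc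
  set G : ℝ → ℂ := fun w : ℝ ↦ Complex.exp (-(c:ℂ)⁻¹ * ‖w‖^2 + (2 * π * Complex.I) * ⟪v, w⟫)
    with hG
  have J : Integrable G := GaussianFourier.integrable_cexp_neg_mul_sq_norm_add hb _ v
  have flip := VectorFourier.integral_fourierIntegral_smul_eq_flip (L := innerₗ ℝ)
      Real.continuous_fourierChar continuous_inner J hh
  rw [flip_innerₗ] at flip
  have hF' : ∀ x : ℝ, VectorFourier.fourierIntegral 𝐞 volume (innerₗ ℝ) h x = 0 := hF
  have key : ∫ w : ℝ, (VectorFourier.fourierIntegral 𝐞 volume (innerₗ ℝ) G w) • h w = 0 := by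
    rw [flip]
    simp [hF']
  rw [← key]
  congr 1 with w
  rw [show VectorFourier.fourierIntegral 𝐞 volume (innerₗ ℝ) G w = 𝓕 G w from rfl, hG,
    fourier_gaussian_innerProductSpace' hb v w]
  congr 2
  · congr 1
    rw [div_eq_mul_inv, inv_inv]
  · rw [div_eq_mul_inv, inv_inv]
    ring

lemma test_integral_zero {h : ℝ → ℂ} (hh : Integrable h) (hF : ∀ ξ : ℝ, 𝓕 h ξ = 0)
    {g : ℝ → ℝ} (hgcont : Continuous g) (hgs : HasCompactSupport g) :
    ∫ x : ℝ, (g x : ℂ) * h x = 0 := by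
  set gc : ℝ → ℂ := fun x => (g x : ℂ) with hgc_def
  have gcont : Continuous gc := Complex.continuous_ofReal.comp hgcont
  have gsupp : HasCompactSupport gc := hgs.comp_left (g := Complex.ofReal) Complex.ofReal_zero
  have gint : Integrable gc := gcont.integrable_of_hasCompactSupport gsupp
  obtain ⟨C, hC⟩ := gsupp.exists_bound_of_continuous gcont
  set K : ℝ → ℝ → ℝ → ℂ := fun c v w =>
    (π * c : ℂ) ^ (Module.finrank ℝ ℝ / 2 : ℂ) *
      Complex.exp (-π ^ 2 * c * ‖v - w‖ ^ 2) with hK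
  have hKnorm : ∀ {c : ℝ}, 0 < c → ∀ v w : ℝ,
      ‖K c v w‖ = (π * c) ^ (1/2 : ℝ) * Real.exp (-π ^ 2 * c * (v - w) ^ 2) := by
    intro c hc v w
    rw [hK, norm_mul]
    congr 1
    · rw [show ((π : ℂ) * c) = ((π * c : ℝ) : ℂ) by push_cast; ring,
        Complex.norm_cpow_eq_rpow_re_of_pos (by positivity)]
      norm_num [Module.finrank_self]
    · rw [Complex.norm_exp]
      congr 1
      have h1 : ((-π ^ 2 * c * (v - w) ^ 2 : ℝ) : ℂ) = -(π:ℂ) ^ 2 * c * (‖v - w‖:ℂ) ^ 2 := by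
        rw [Real.norm_eq_abs]
        push_cast
        norm_cast
        rw [_root_.sq_abs]
      rw [← h1, Complex.ofReal_re]
  have hC0 : 0 ≤ C := le_trans (norm_nonneg (gc 0)) (hC 0)
  have hgauss_int : ∀ {c : ℝ}, 0 < c → ∀ v : ℝ,
      Integrable (fun w : ℝ => Real.exp (-π ^ 2 * c * (v - w) ^ 2)) := by
    intro c hc v
    have h0 : Integrable (fun w : ℝ => Real.exp (-(π ^ 2 * c) * w ^ 2)) :=
      integrable_exp_neg_mul_sq (by positivity)
    have := h0.comp_sub_left v
    apply this.congr
    filter_upwards with w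
    ring_nf
  have hKnorm_int : ∀ {c : ℝ}, 0 < c → ∀ v : ℝ,
      Integrable (fun w : ℝ => ‖K c v w‖) := by
    intro c hc v
    have := ((hgauss_int hc v).const_mul ((π * c) ^ (1/2 : ℝ)))
    apply this.congr
    filter_upwards with w
    rw [hKnorm hc]
  have hKmass : ∀ {c : ℝ}, 0 < c → ∀ v : ℝ, ∫ w : ℝ, ‖K c v w‖ = 1 := by
    intro c hc v
    calc ∫ w : ℝ, ‖K c v w‖
        = ∫ w : ℝ, (π * c) ^ (1/2 : ℝ) * Real.exp (-π ^ 2 * c * (v - w) ^ 2) := by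
          congr 1 with w; rw [hKnorm hc]
      _ = (π * c) ^ (1/2 : ℝ) * ∫ w : ℝ, Real.exp (-π ^ 2 * c * (v - w) ^ 2) :=
          integral_const_mul _ _
      _ = (π * c) ^ (1/2 : ℝ) * ∫ w : ℝ, Real.exp (-(π ^ 2 * c) * w ^ 2) := by
          congr 1
          rw [← integral_sub_left_eq_self (fun w : ℝ => Real.exp (-(π ^ 2 * c) * w ^ 2))
            volume v]
          congr 1 with w
          ring_nf
      _ = (π * c) ^ (1/2 : ℝ) * Real.sqrt (π / (π ^ 2 * c)) := by
          rw [integral_gaussian]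
      _ = 1 := by
          rw [Real.sqrt_eq_rpow, ← Real.mul_rpow (by positivity) (by positivity),
            show (π * c) * (π / (π ^ 2 * c)) = 1 by field_simp, Real.one_rpow]
  have hKcont : ∀ c : ℝ, Continuous (fun p : ℝ × ℝ => K c p.1 p.2) := by
    intro c
    apply continuous_const.mul
    apply Continuous.cexp
    fun_prop
  have hIw_int : ∀ (c v : ℝ), Integrable (fun w => K c v w * gc w) := by
    intro c v
    apply Continuous.integrable_of_hasCompactSupport
    · exact ((hKcont c).comp (Continuous.prodMk_right v)).mul gcont
    · exact gsupp.mul_left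
  have hIv_cont : ∀ {c : ℝ}, 0 < c → Continuous (fun v => ∫ w, K c v w * gc w) := by
    intro c hc
    apply continuous_of_dominated (bound := fun w => (π * c) ^ (1/2 : ℝ) * ‖gc w‖)
    · intro v; exact (hIw_int c v).1
    · intro v
      filter_upwards with w
      rw [norm_mul, hKnorm hc]
      have h1 : Real.exp (-π ^ 2 * c * (v - w) ^ 2) ≤ 1 :=
        Real.exp_le_one_iff.2 (by nlinarith [mul_nonneg (mul_nonneg (sq_nonneg π) hc.le) (sq_nonneg (v - w))])
      have h2 : (0:ℝ) ≤ (π * c) ^ (1/2 : ℝ) := Real.rpow_nonneg (by positivity) _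
      calc (π * c) ^ (1/2 : ℝ) * Real.exp (-π ^ 2 * c * (v - w) ^ 2) * ‖gc w‖
          ≤ (π * c) ^ (1/2 : ℝ) * 1 * ‖gc w‖ := by
            gcongr
        _ = (π * c) ^ (1/2 : ℝ) * ‖gc w‖ := by ring
    · exact gint.norm.const_mul _
    · filter_upwards with w
      exact (((hKcont c).comp (continuous_id.prodMk continuous_const)).mul continuous_const)
  have hIv_bound : ∀ {c : ℝ}, 0 < c → ∀ v : ℝ, ‖∫ w, K c v w * gc w‖ ≤ C := by
    intro c hc v
    calc ‖∫ w, K c v w * gc w‖ ≤ ∫ w, ‖K c v w * gc w‖ := norm_integral_le_integral_norm _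
      _ ≤ ∫ w, ‖K c v w‖ * C := by
          apply integral_mono_of_nonneg
          · filter_upwards with w using norm_nonneg _
          · exact (hKnorm_int hc v).mul_const C
          · filter_upwards with w
            rw [norm_mul]
            exact mul_le_mul_of_nonneg_left (hC w) (norm_nonneg _)
      _ = C := by rw [integral_mul_const, hKmass hc, one_mul]
  have hsymm : ∀ c v w : ℝ, K c v w = K c w v := by
    intro c v w
    rw [hK]
    simp only [norm_sub_rev]
  have hzero : ∀ {c : ℝ}, 0 < c → (∫ v, (∫ w, K c v w * gc w) * h v) = 0 := by
    intro c hc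
    have hker : Integrable (Function.uncurry fun v w => (K c v w * gc w) * h v)
        (volume.prod volume) := by
      have hbnd : Integrable (fun p : ℝ × ℝ =>
          (π * c) ^ (1/2 : ℝ) * (‖h p.1‖ * ‖gc p.2‖)) (volume.prod volume) :=
        (hh.norm.mul_prod gint.norm).const_mul _
      apply hbnd.mono'
      · exact (((hKcont c).mul (gcont.comp continuous_snd)).aestronglyMeasurable.mul hh.1.comp_fst)
      · filter_upwards with p
        rw [Function.uncurry]
        rw [norm_mul, norm_mul, hKnorm hc]
        have h1 : Real.exp (-π ^ 2 * c * (p.1 - p.2) ^ 2) ≤ 1 :=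
          Real.exp_le_one_iff.2
            (by nlinarith [mul_nonneg (mul_nonneg (sq_nonneg π) hc.le) (sq_nonneg (p.1 - p.2))])
        have h2 : (0:ℝ) ≤ (π * c) ^ (1/2 : ℝ) := Real.rpow_nonneg (by positivity) _
        calc (π * c) ^ (1/2 : ℝ) * Real.exp (-π ^ 2 * c * (p.1 - p.2) ^ 2) * ‖gc p.2‖ * ‖h p.1‖
            ≤ (π * c) ^ (1/2 : ℝ) * 1 * ‖gc p.2‖ * ‖h p.1‖ := by gcongr
          _ = (π * c) ^ (1/2 : ℝ) * (‖h p.1‖ * ‖gc p.2‖) := by ring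
    calc ∫ v, (∫ w, K c v w * gc w) * h v
        = ∫ v, ∫ w, (K c v w * gc w) * h v := by
          congr 1 with v
          rw [← integral_mul_const]
      _ = ∫ w, ∫ v, (K c v w * gc w) * h v := integral_integral_swap hker
      _ = ∫ w, gc w * ∫ v, K c w v * h v := by
          congr 1 with w
          rw [← integral_const_mul]
          congr 1 with v
          rw [hsymm c v w]
          ring
      _ = 0 := by
          have hz : ∀ w : ℝ, (∫ v, K c w v * h v) = 0 := by
            intro w
            rw [← gauss_conv_zero hh hF hc w]
            congr 1 with v
          simp only [hz, mul_zero, integral_zero]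
  have main : Tendsto (fun c : ℝ => ∫ v, (∫ w, K c v w * gc w) * h v) atTop
      (𝓝 (∫ v, gc v * h v)) := by
    apply tendsto_integral_filter_of_dominated_convergence (fun v => C * ‖h v‖)
    · filter_upwards [eventually_gt_atTop (0:ℝ)] with c hc
      exact ((hIv_cont hc).aestronglyMeasurable).mul hh.1
    · filter_upwards [eventually_gt_atTop (0:ℝ)] with c hc
      filter_upwards with v
      rw [norm_mul]
      exact mul_le_mul_of_nonneg_right (hIv_bound hc v) (norm_nonneg _)
    · exact hh.norm.const_mul C
    · filter_upwards with v
      have hts := Real.tendsto_integral_gaussian_smul' (V := ℝ) gint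
        (gcont.continuousAt (x := v))
      have hts' : Tendsto (fun c : ℝ => ∫ w, K c v w * gc w) atTop (𝓝 (gc v)) := by
        apply hts.congr
        intro c
        congr 1 with w
      exact hts'.mul_const (h v)
  have zeroev : (fun c : ℝ => ∫ v, (∫ w, K c v w * gc w) * h v) =ᶠ[atTop]
      (fun _ => (0:ℂ)) := by
    filter_upwards [eventually_gt_atTop (0:ℝ)] with c hc using hzero hc
  have h0 := tendsto_nhds_unique (main.congr' zeroev) tendsto_const_nhds
  exact h0

lemma ae_zero_of_FT_zero {h : ℝ → ℂ} (hh : Integrable h) (hF : ∀ ξ : ℝ, 𝓕 h ξ = 0) :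
    ∀ᵐ x : ℝ, h x = 0 := by
  apply ae_eq_zero_of_integral_contDiff_smul_eq_zero hh.locallyIntegrable
  intro g gsmooth gsupp
  have := test_integral_zero hh hF gsmooth.continuous gsupp
  simpa [Complex.real_smul] using this

/-- Identifiability of the semiparametric convolution model: if two probability densities
`f₁, f₂`, each satisfying Assumption (A), and parameters `s₁, s₂ ∈ (0,2]`, `γ₁, γ₂ > 0`
produce the same Fourier transform of the observations, i.e.
`Φ^{f₁}(u) e^{-|γ₁ u|^{s₁}} = Φ^{f₂}(u) e^{-|γ₂ u|^{s₂}}` for all `u`, then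
`s₁ = s₂`, `γ₁ = γ₂`, `Φ^{f₁} = Φ^{f₂}` and hence `f₁ = f₂` almost everywhere. -/
theorem convolution_model_identifiability
    (f₁ f₂ : ℝ → ℝ)
    (hf₁_int : Integrable f₁) (hf₂_int : Integrable f₂)
    (hf₁_nonneg : ∀ x, 0 ≤ f₁ x) (hf₂_nonneg : ∀ x, 0 ≤ f₂ x)
    (hf₁_mass : ∫ x : ℝ, f₁ x = 1) (hf₂_mass : ∫ x : ℝ, f₂ x = 1)
    (A₁ β₁' u₁ : ℝ) (hA₁ : 0 < A₁) (hβ₁' : 0 < β₁') (hu₁ : 0 < u₁)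
    (hfA₁ : ∀ u : ℝ, u₁ ≤ |u| → A₁ * |u| ^ (-β₁') ≤ ‖FT f₁ u‖)
    (A₂ β₂' u₂ : ℝ) (hA₂ : 0 < A₂) (hβ₂' : 0 < β₂') (hu₂ : 0 < u₂)
    (hfA₂ : ∀ u : ℝ, u₂ ≤ |u| → A₂ * |u| ^ (-β₂') ≤ ‖FT f₂ u‖)
    (s₁ s₂ γ₁ γ₂ : ℝ)
    (hs₁ : s₁ ∈ Set.Ioc (0 : ℝ) 2) (hs₂ : s₂ ∈ Set.Ioc (0 : ℝ) 2)
    (hγ₁ : 0 < γ₁) (hγ₂ : 0 < γ₂)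
    (heq : ∀ u : ℝ,
      FT f₁ u * Real.exp (-|γ₁ * u| ^ s₁) = FT f₂ u * Real.exp (-|γ₂ * u| ^ s₂)) :
    s₁ = s₂ ∧ γ₁ = γ₂ ∧ (∀ u : ℝ, FT f₁ u = FT f₂ u) ∧ f₁ =ᵐ[volume] f₂ := by
  have hn1 := FT_norm_le_one hf₁_int hf₁_nonneg hf₁_mass
  have hn2 := FT_norm_le_one hf₂_int hf₂_nonneg hf₂_mass
  have hnormeq : ∀ u : ℝ,
      ‖FT f₁ u‖ * Real.exp (-|γ₁ * u| ^ s₁) = ‖FT f₂ u‖ * Real.exp (-|γ₂ * u| ^ s₂) := by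
    intro u
    have := congrArg norm (heq u)
    simpa [norm_mul, Complex.norm_real, Real.norm_eq_abs, Real.abs_exp, Complex.norm_exp] using this
  -- the two eventual inequalities
  have ev1 : ∀ᶠ u in atTop,
      (γ₂ * u) ^ s₂ ≤ (γ₁ * u) ^ s₁ + β₁' * Real.log u - Real.log A₁ := by
    filter_upwards [eventually_ge_atTop (max (max u₁ u₂) 1)] with u hu
    have hu1 : (1:ℝ) ≤ u := le_trans (le_max_right _ _) hu
    have hu0 : (0:ℝ) < u := lt_of_lt_of_le one_pos hu1
    have habs : |u| = u := abs_of_pos hu0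
    have hg1 : |γ₁ * u| = γ₁ * u := abs_of_pos (mul_pos hγ₁ hu0)
    have hg2 : |γ₂ * u| = γ₂ * u := abs_of_pos (mul_pos hγ₂ hu0)
    have hA := hfA₁ u (by rw [habs]; exact le_trans (le_trans (le_max_left _ _) (le_max_left _ _)) hu)
    rw [habs] at hA
    have key1 : A₁ * u ^ (-β₁') * Real.exp (-(γ₁*u) ^ s₁) ≤ Real.exp (-(γ₂*u) ^ s₂) := by
      calc A₁ * u ^ (-β₁') * Real.exp (-(γ₁*u) ^ s₁)
          ≤ ‖FT f₁ u‖ * Real.exp (-(γ₁*u) ^ s₁) := by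
            gcongr
        _ = ‖FT f₂ u‖ * Real.exp (-(γ₂*u) ^ s₂) := by rw [← hg1, ← hg2]; exact hnormeq u
        _ ≤ 1 * Real.exp (-(γ₂*u) ^ s₂) := by gcongr; exact hn2 u
        _ = Real.exp (-(γ₂*u) ^ s₂) := one_mul _
    have hpos : (0:ℝ) < A₁ * u ^ (-β₁') * Real.exp (-(γ₁*u) ^ s₁) := by positivity
    have hlog := Real.log_le_log hpos key1
    rw [Real.log_exp, Real.log_mul (by positivity) (Real.exp_ne_zero _), Real.log_mul
      (ne_of_gt hA₁) (by positivity), Real.log_exp, Real.log_rpow hu0] at hlog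
    linarith
  have ev2 : ∀ᶠ u in atTop,
      (γ₁ * u) ^ s₁ ≤ (γ₂ * u) ^ s₂ + β₂' * Real.log u - Real.log A₂ := by
    filter_upwards [eventually_ge_atTop (max (max u₁ u₂) 1)] with u hu
    have hu1 : (1:ℝ) ≤ u := le_trans (le_max_right _ _) hu
    have hu0 : (0:ℝ) < u := lt_of_lt_of_le one_pos hu1
    have habs : |u| = u := abs_of_pos hu0
    have hg1 : |γ₁ * u| = γ₁ * u := abs_of_pos (mul_pos hγ₁ hu0)
    have hg2 : |γ₂ * u| = γ₂ * u := abs_of_pos (mul_pos hγ₂ hu0)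
    have hA := hfA₂ u (by rw [habs]; exact le_trans (le_trans (le_max_right _ _) (le_max_left _ _)) hu)
    rw [habs] at hA
    have key1 : A₂ * u ^ (-β₂') * Real.exp (-(γ₂*u) ^ s₂) ≤ Real.exp (-(γ₁*u) ^ s₁) := by
      calc A₂ * u ^ (-β₂') * Real.exp (-(γ₂*u) ^ s₂)
          ≤ ‖FT f₂ u‖ * Real.exp (-(γ₂*u) ^ s₂) := by
            gcongr
        _ = ‖FT f₁ u‖ * Real.exp (-(γ₁*u) ^ s₁) := by rw [← hg1, ← hg2]; exact (hnormeq u).symm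
        _ ≤ 1 * Real.exp (-(γ₁*u) ^ s₁) := by gcongr; exact hn1 u
        _ = Real.exp (-(γ₁*u) ^ s₁) := one_mul _
    have hpos : (0:ℝ) < A₂ * u ^ (-β₂') * Real.exp (-(γ₂*u) ^ s₂) := by positivity
    have hlog := Real.log_le_log hpos key1
    rw [Real.log_exp, Real.log_mul (by positivity) (Real.exp_ne_zero _), Real.log_mul
      (ne_of_gt hA₂) (by positivity), Real.log_exp, Real.log_rpow hu0] at hlog
    linarith
  have hseq : s₁ = s₂ := by
    rcases lt_trichotomy s₁ s₂ with hlt | heq' | hgt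
    · exact absurd (aux_key hA₁ hγ₁ hγ₂ hs₁.1 hs₂.1 ev1 (Or.inl hlt)) id
    · exact heq'
    · exact absurd (aux_key hA₂ hγ₂ hγ₁ hs₂.1 hs₁.1 ev2 (Or.inl hgt)) id
  have hgeq : γ₁ = γ₂ := by
    rcases lt_trichotomy γ₁ γ₂ with hlt | heq' | hgt
    · exact absurd (aux_key hA₁ hγ₁ hγ₂ hs₁.1 hs₂.1 ev1 (Or.inr ⟨hseq, hlt⟩)) id
    · exact heq'
    · exact absurd (aux_key hA₂ hγ₂ hγ₁ hs₂.1 hs₁.1 ev2 (Or.inr ⟨hseq.symm, hgt⟩)) id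
  have hFTeq : ∀ u : ℝ, FT f₁ u = FT f₂ u := by
    intro u
    have h := heq u
    rw [hseq, hgeq] at h
    exact mul_right_cancel₀ (Complex.ofReal_ne_zero.2 (Real.exp_ne_zero _)) h
  refine ⟨hseq, hgeq, hFTeq, ?_⟩
  set h : ℝ → ℂ := fun x => (f₁ x : ℂ) - (f₂ x : ℂ) with hdef
  have hh : Integrable h := hf₁_int.ofReal.sub hf₂_int.ofReal
  have hFz : ∀ ξ : ℝ, 𝓕 h ξ = 0 := by
    intro ξ
    have hcast : h = fun x : ℝ => ((f₁ x - f₂ x : ℝ) : ℂ) := by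
      funext x; push_cast; ring
    rw [hcast, FT_eq_fourierIntegral, FT_sub hf₁_int hf₂_int, hFTeq, sub_self]
  have := ae_zero_of_FT_zero hh hFz
  filter_upwards [this] with x hx
  have : (f₁ x : ℂ) = (f₂ x : ℂ) := sub_eq_zero.1 hx
  exact_mod_cast this
end

section
/- First inequality of Lemma 1: Fix 0 < s̲ ≤ s̄ ≤ 2, A > 0, β' > 0, δ > β' and c > 2β'. For each integer n ≥ 3 let σ(n), τ(n) ∈ [s̲, s̄] satisfy τ(n) − σ(n) ≥ c/log n, and set u_n = ( (log n)/2 − (δ/σ(n))·log log n )^{1/σ(n)}. Then A^{−1} u_n^{β'} exp( u_n^{σ(n)} − u_n^{τ(n)} ) → 0 as n → ∞; equivalently, (1/2)( A u_n^{−β'} e^{−u_n^{σ(n)}} − e^{−u_n^{τ(n)}} ) ≥ (1/2) A u_n^{−β'} e^{−u_n^{σ(n)}} (1 + o(1)). -/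
open Filter Real Asymptotics

/-- `K · log log n` is eventually at most `a · log n` for any `a > 0`. -/
lemma loglog_le_eventually (K a : ℝ) (ha : 0 < a) :
    ∀ᶠ n : ℕ in atTop, K * Real.log (Real.log n) ≤ a * Real.log n := by
  have h1 : (fun y : ℝ => K * Real.log y) =o[atTop] (fun y : ℝ => y) :=
    Real.isLittleO_log_id_atTop.const_mul_left K
  have h2 := h1.def ha
  have h3 : Tendsto (fun n : ℕ => Real.log n) atTop atTop :=
    Real.tendsto_log_atTop.comp tendsto_natCast_atTop_atTop
  filter_upwards [h3.eventually h2, h3.eventually_ge_atTop 0] with n hn hn0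
  calc K * Real.log (Real.log n) ≤ ‖K * Real.log (Real.log n)‖ := le_abs_self _
    _ ≤ a * ‖Real.log (n:ℝ)‖ := hn
    _ = a * Real.log n := by rw [Real.norm_eq_abs, abs_of_nonneg hn0]

/-- First inequality of Lemma 1 (Butucea–Matias–Pouet). -/
theorem lemma1_first_inequality
    (sl sb A β' δ c : ℝ)
    (hsl : 0 < sl) (hslb : sl ≤ sb) (hsb : sb ≤ 2)
    (hA : 0 < A) (hβ' : 0 < β') (hδ : β' < δ) (hc : 2 * β' < c)
    (σ τ : ℕ → ℝ)
    (hσ : ∀ n : ℕ, 3 ≤ n → σ n ∈ Set.Icc sl sb)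
    (hτ : ∀ n : ℕ, 3 ≤ n → τ n ∈ Set.Icc sl sb)
    (hgap : ∀ n : ℕ, 3 ≤ n → c / Real.log n ≤ τ n - σ n)
    (u : ℕ → ℝ)
    (hu : ∀ n : ℕ, 3 ≤ n →
      u n = (Real.log n / 2 - (δ / σ n) * Real.log (Real.log n)) ^ (1 / σ n)) :
    Tendsto
      (fun n : ℕ => A⁻¹ * (u n) ^ β' * Real.exp ((u n) ^ (σ n) - (u n) ^ (τ n)))
      atTop (nhds 0) := by
  have hc0 : 0 < c := by linarith
  obtain ⟨ε, hεdef⟩ : ∃ ε : ℝ, ε = c / 4 - β' / 2 := ⟨_, rfl⟩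
  have hε : 0 < ε := by rw [hεdef]; linarith
  obtain ⟨v, hvdef⟩ : ∃ v : ℕ → ℝ,
      v = fun n : ℕ => Real.log (n : ℝ) / 2 - δ / σ n * Real.log (Real.log (n : ℝ)) := ⟨_, rfl⟩
  have hvn : ∀ n : ℕ, v n = Real.log n / 2 - δ / σ n * Real.log (Real.log n) := by
    intro n; rw [hvdef]
  -- basic facts for n ≥ 3
  have hlog1 : ∀ n : ℕ, 3 ≤ n → 1 < Real.log n := by
    intro n hn
    have h3n : (3:ℝ) ≤ n := by exact_mod_cast hn
    have : (1:ℝ) < Real.log 3 := by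
      rw [Real.lt_log_iff_exp_lt (by norm_num)]
      calc Real.exp 1 < 2.7182818286 := Real.exp_one_lt_d9
        _ < 3 := by norm_num
    exact lt_of_lt_of_le this (Real.log_le_log (by norm_num) h3n)
  -- v n ≥ log n / 2 - (δ/sl) log log n eventually, and v n ≥ log n / 4 eventually
  have hvw : ∀ᶠ n : ℕ in atTop,
      Real.log n / 2 - δ / sl * Real.log (Real.log n) ≤ v n := by
    filter_upwards [eventually_ge_atTop 3] with n hn
    have hσn := hσ n hn
    have hLL : 0 ≤ Real.log (Real.log n) :=
      Real.log_nonneg (le_of_lt (hlog1 n hn))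
    have hdiv : δ / σ n ≤ δ / sl := by
      gcongr
      · linarith
      · exact hσn.1
    have : δ / σ n * Real.log (Real.log n) ≤ δ / sl * Real.log (Real.log n) :=
      mul_le_mul_of_nonneg_right hdiv hLL
    rw [hvn n]
    linarith
  have hquarter : ∀ᶠ n : ℕ in atTop, Real.log n / 4 ≤ v n := by
    filter_upwards [hvw, loglog_le_eventually (δ / sl) (1/4) (by norm_num)] with n h1 h2
    linarith
  have hlogn_top : Tendsto (fun n : ℕ => Real.log n) atTop atTop :=
    Real.tendsto_log_atTop.comp tendsto_natCast_atTop_atTop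
  have hv_top : Tendsto v atTop atTop := by
    apply tendsto_atTop_mono' atTop hquarter
    exact hlogn_top.atTop_div_const (by norm_num)
  -- eventually c * v n ≥ (β' + ε) * log n
  have hcv : ∀ᶠ n : ℕ in atTop, (β' + ε) * Real.log n ≤ c * v n := by
    filter_upwards [hvw, loglog_le_eventually (c * (δ / sl)) ε hε] with n h1 h2
    have h3 : c * (Real.log n / 2 - δ / sl * Real.log (Real.log n)) ≤ c * v n :=
      mul_le_mul_of_nonneg_left h1 hc0.le
    have h4 : c * (Real.log n / 2 - δ / sl * Real.log (Real.log n))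
        = c / 2 * Real.log n - c * (δ / sl) * Real.log (Real.log n) := by ring
    have h5 : (β' + ε) * Real.log n = c / 2 * Real.log n - ε * Real.log n := by
      rw [hεdef]; ring
    linarith [h2, h3, h4.le, h4.ge, h5.le, h5.ge]
  -- the dominating sequence and its limit
  have hlogv_top : Tendsto (fun n => Real.log (v n)) atTop atTop :=
    Real.tendsto_log_atTop.comp hv_top
  have hdom : Tendsto (fun n : ℕ => A⁻¹ * Real.exp (-(ε / sb) * Real.log (v n)))
      atTop (nhds 0) := by
    have hsb0 : 0 < sb := lt_of_lt_of_le hsl hslb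
    have h1 : Tendsto (fun n => (ε / sb) * Real.log (v n)) atTop atTop :=
      hlogv_top.const_mul_atTop (div_pos hε hsb0)
    have h2 : Tendsto (fun n => -((ε / sb) * Real.log (v n))) atTop atBot :=
      tendsto_neg_atTop_atBot.comp h1
    have h3 : Tendsto (fun n : ℕ => Real.exp (-(ε / sb) * Real.log (v n)))
        atTop (nhds 0) := by
      simpa [Function.comp_def, neg_mul] using Real.tendsto_exp_atBot.comp h2
    simpa using h3.const_mul A⁻¹
  -- squeeze
  apply squeeze_zero' (g := fun n : ℕ => A⁻¹ * Real.exp (-(ε / sb) * Real.log (v n)))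
  · -- nonnegativity
    filter_upwards [hv_top.eventually_ge_atTop 1, eventually_ge_atTop 3] with n hv1 hn3
    have hv0 : (0:ℝ) ≤ v n := by linarith
    have hu0 : 0 ≤ u n := by
      rw [hu n hn3]
      exact Real.rpow_nonneg (by rw [← hvn n]; exact hv0) _
    positivity
  · -- the key eventual bound
    filter_upwards [hv_top.eventually_ge_atTop 1, hcv, eventually_ge_atTop 3] with n hv1 hcvn hn3
    have hσn := hσ n hn3
    have hτn := hτ n hn3
    have hs0 : 0 < σ n := lt_of_lt_of_le hsl hσn.1
    have hsb0 : 0 < sb := lt_of_lt_of_le hsl hslb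
    have hv0 : (0:ℝ) < v n := by linarith
    have hLn : 0 < Real.log n := lt_trans one_pos (hlog1 n hn3)
    have hun : u n = v n ^ (1 / σ n) := by rw [hvn n]; exact hu n hn3
    have hus : u n ^ σ n = v n := by
      rw [hun, ← Real.rpow_mul hv0.le, one_div_mul_cancel hs0.ne', Real.rpow_one]
    have hut : u n ^ τ n = v n ^ (τ n / σ n) := by
      rw [hun, ← Real.rpow_mul hv0.le, one_div_mul_eq_div]
    have hub : u n ^ β' = v n ^ (β' / σ n) := by
      rw [hun, ← Real.rpow_mul hv0.le, one_div_mul_eq_div]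
    obtain ⟨Lv, hLvdef⟩ : ∃ Lv : ℝ, Lv = Real.log (v n) := ⟨_, rfl⟩
    have hLv0 : 0 ≤ Lv := hLvdef ▸ Real.log_nonneg hv1
    -- bound on v ^ (τ/σ)
    have hsplit : τ n / σ n = 1 + (τ n - σ n) / σ n := by field_simp; ring
    have hgrowth : v n * (1 + (τ n - σ n) / σ n * Lv) ≤ v n ^ (τ n / σ n) := by
      rw [hsplit, Real.rpow_add hv0, Real.rpow_one]
      have h1 : 1 + (τ n - σ n) / σ n * Lv ≤ v n ^ ((τ n - σ n) / σ n) := by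
        rw [Real.rpow_def_of_pos hv0, ← hLvdef]
        have := Real.add_one_le_exp (Lv * ((τ n - σ n) / σ n))
        linarith [this]
      calc v n * (1 + (τ n - σ n) / σ n * Lv) ≤ v n * v n ^ ((τ n - σ n) / σ n) :=
            mul_le_mul_of_nonneg_left h1 hv0.le
        _ = _ := rfl
    -- the gap bound
    have hvg : β' + ε ≤ v n * (τ n - σ n) := by
      have h1 : c / Real.log n ≤ τ n - σ n := hgap n hn3
      have h2 : v n * (c / Real.log n) ≤ v n * (τ n - σ n) :=
        mul_le_mul_of_nonneg_left h1 hv0.le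
      have h3 : (β' + ε) * Real.log n ≤ c * v n := hcvn
      have h4 : v n * (c / Real.log n) = c * v n / Real.log n := by ring
      have h5 : β' + ε ≤ c * v n / Real.log n := by
        rw [le_div_iff₀ hLn]; linarith
      linarith [h2, h5, h4.ge, h4.le]
    -- exponent bound
    have hkey : Lv * (β' / σ n) + (v n - v n ^ (τ n / σ n)) ≤ -(ε / sb) * Lv := by
      have h1 : v n - v n ^ (τ n / σ n) ≤ -(v n * ((τ n - σ n) / σ n) * Lv) := by
        nlinarith [hgrowth]
      have h2 : Lv * (β' / σ n) - v n * ((τ n - σ n) / σ n) * Lv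
          = (β' - v n * (τ n - σ n)) * Lv / σ n := by field_simp
      have h3 : (β' - v n * (τ n - σ n)) * Lv ≤ (-ε) * Lv :=
        mul_le_mul_of_nonneg_right (by linarith) hLv0
      have h4 : (β' - v n * (τ n - σ n)) * Lv / σ n ≤ (-ε) * Lv / σ n :=
        (div_le_div_iff_of_pos_right hs0).mpr h3
      have h5 : (-ε) * Lv / σ n ≤ -(ε / sb) * Lv := by
        have h6 : ε / sb ≤ ε / σ n := div_le_div_of_nonneg_left hε.le hs0 hσn.2
        have h7 : (ε / sb) * Lv ≤ (ε / σ n) * Lv := mul_le_mul_of_nonneg_right h6 hLv0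
        have h8 : (-ε) * Lv / σ n = -((ε / σ n) * Lv) := by ring
        linarith [h7, h8.le, h8.ge]
      linarith [h1, h2.le, h2.ge, h4, h5]
    -- final computation
    have hexp : A⁻¹ * u n ^ β' * Real.exp (u n ^ σ n - u n ^ τ n)
        = A⁻¹ * Real.exp (Lv * (β' / σ n) + (v n - v n ^ (τ n / σ n))) := by
      rw [hus, hut, hub, Real.rpow_def_of_pos hv0, ← hLvdef, mul_assoc, ← Real.exp_add]
    rw [hexp, ← hLvdef]
    have hAinv : (0:ℝ) ≤ A⁻¹ := (inv_pos.mpr hA).le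
    exact mul_le_mul_of_nonneg_left (Real.exp_le_exp.mpr hkey) hAinv
  · exact hdom
end
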